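/- Let p, a, c be positive integers, let A₀ ∈ ℝ^{p×p} be symmetric, let L ∈ ℝ^{a×p} and R ∈ ℝ^{c×p}, and let ρ > 0. Then the robust linear matrix inequality 'A₀ + Lᵀ ζ R + Rᵀ ζᵀ L ≻ 0 (positive definite) for every ζ ∈ ℝ^{a×c} with spectral norm ‖ζ‖_{2,2} ≤ ρ' holds if and only if there exists λ ∈ ℝ such that the symmetric (a+p)×(a+p) block matrix [ [ λ I_a , ρ L ] ; [ ρ Lᵀ , A₀ − λ RᵀR ] ] is positive definite. -/

import Mathlib

open Matrix

/-- The Euclidean (L²) norm of a finite real vector. -/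
noncomputable def euclNorm {k : ℕ} (v : Fin k → ℝ) : ℝ :=
  Real.sqrt (∑ i, v i ^ 2)

/-- The spectral norm (largest singular value) of a real matrix: the operator norm
`sup {‖ζu‖₂ : ‖u‖₂ ≤ 1}` with respect to Euclidean norms. -/
noncomputable def specNorm {a c : ℕ} (ζ : Matrix (Fin a) (Fin c) ℝ) : ℝ :=
  sSup ((fun u => euclNorm (ζ.mulVec u)) '' {u : Fin c → ℝ | euclNorm u ≤ 1})

namespace RobustSDP

lemma euclNorm_nonneg {k : ℕ} (v : Fin k → ℝ) : 0 ≤ euclNorm v := Real.sqrt_nonneg _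

lemma euclNorm_sq {k : ℕ} (v : Fin k → ℝ) : euclNorm v ^ 2 = ∑ i, v i ^ 2 :=
  Real.sq_sqrt (Finset.sum_nonneg fun i _ => sq_nonneg _)

lemma dot_self_eq {k : ℕ} (v : Fin k → ℝ) : v ⬝ᵥ v = ∑ i, v i ^ 2 := by
  simp [dotProduct, sq]

lemma euclNorm_sq_dot {k : ℕ} (v : Fin k → ℝ) : euclNorm v ^ 2 = v ⬝ᵥ v := by
  rw [euclNorm_sq, dot_self_eq]

lemma euclNorm_zero {k : ℕ} : euclNorm (0 : Fin k → ℝ) = 0 := by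
  simp [euclNorm]

lemma euclNorm_smul {k : ℕ} (c : ℝ) (v : Fin k → ℝ) :
    euclNorm (c • v) = |c| * euclNorm v := by
  unfold euclNorm
  rw [← Real.sqrt_sq_eq_abs, ← Real.sqrt_mul (sq_nonneg c)]
  congr 1
  rw [Finset.mul_sum]
  congr 1; ext i
  simp [mul_pow]

lemma euclNorm_eq_zero {k : ℕ} {v : Fin k → ℝ} (h : euclNorm v = 0) : v = 0 := by
  have h2 : ∑ i, v i ^ 2 = 0 := by
    have := euclNorm_sq v; rw [h] at this; simpa using this.symm
  funext i
  have := (Finset.sum_eq_zero_iff_of_nonneg (fun i _ => sq_nonneg (v i))).1 h2 i (Finset.mem_univ i)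
  exact pow_eq_zero_iff (by norm_num) |>.1 this

lemma euclNorm_pos {k : ℕ} {v : Fin k → ℝ} (h : v ≠ 0) : 0 < euclNorm v :=
  lt_of_le_of_ne (euclNorm_nonneg v) fun h0 => h (euclNorm_eq_zero h0.symm)

lemma abs_dot_le {k : ℕ} (v w : Fin k → ℝ) : |v ⬝ᵥ w| ≤ euclNorm v * euclNorm w := by
  have h := Finset.sum_mul_sq_le_sq_mul_sq Finset.univ v w
  have : |v ⬝ᵥ w| = Real.sqrt ((v ⬝ᵥ w) ^ 2) := (Real.sqrt_sq_eq_abs _).symm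
  rw [this, euclNorm, euclNorm, ← Real.sqrt_mul (Finset.sum_nonneg fun i _ => sq_nonneg _)]
  exact Real.sqrt_le_sqrt (by simpa [dotProduct] using h)

lemma euclNorm_mulVec_le {m k : ℕ} (ζ : Matrix (Fin m) (Fin k) ℝ) (u : Fin k → ℝ) :
    euclNorm (ζ *ᵥ u) ≤ Real.sqrt (∑ i, ∑ j, ζ i j ^ 2) * euclNorm u := by
  rw [euclNorm]
  have hrw : Real.sqrt (∑ i, ∑ j, ζ i j ^ 2) * euclNorm u
      = Real.sqrt ((∑ i, ∑ j, ζ i j ^ 2) * euclNorm u ^ 2) := by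
    have hx0 : 0 ≤ ∑ i, ∑ j, ζ i j ^ 2 :=
      Finset.sum_nonneg fun i _ => Finset.sum_nonneg fun j _ => sq_nonneg _
    rw [Real.sqrt_mul hx0]
    rw [Real.sqrt_sq (euclNorm_nonneg u)]
  rw [hrw]
  apply Real.sqrt_le_sqrt
  rw [euclNorm_sq, Finset.sum_mul]
  apply Finset.sum_le_sum
  intro i _
  have h := Finset.sum_mul_sq_le_sq_mul_sq Finset.univ (fun j => ζ i j) u
  calc (ζ *ᵥ u) i ^ 2 = (∑ j, ζ i j * u j) ^ 2 := by rfl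
    _ ≤ (∑ j, ζ i j ^ 2) * ∑ j, u j ^ 2 := h

lemma specNorm_le {m k : ℕ} (ζ : Matrix (Fin m) (Fin k) ℝ) {ρ : ℝ} (hρ : 0 ≤ ρ)
    (h : ∀ u : Fin k → ℝ, euclNorm u ≤ 1 → euclNorm (ζ *ᵥ u) ≤ ρ) : specNorm ζ ≤ ρ :=
  Real.sSup_le (by rintro x ⟨u, hu, rfl⟩; exact h u hu) hρ

lemma euclNorm_mulVec_le_specNorm {m k : ℕ} (ζ : Matrix (Fin m) (Fin k) ℝ) {ρ : ℝ}
    (hspec : specNorm ζ ≤ ρ) (u : Fin k → ℝ) :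
    euclNorm (ζ *ᵥ u) ≤ ρ * euclNorm u := by
  rcases eq_or_ne u 0 with rfl | hu
  · simp [Matrix.mulVec_zero, euclNorm_zero]
  · have hnu : 0 < euclNorm u := euclNorm_pos hu
    set u' : Fin k → ℝ := (euclNorm u)⁻¹ • u with hu'
    have hnu' : euclNorm u' = 1 := by
      rw [hu', euclNorm_smul, abs_of_pos (inv_pos.2 hnu), inv_mul_cancel₀ hnu.ne']
    have hmem : euclNorm (ζ *ᵥ u') ∈
        ((fun u => euclNorm (ζ.mulVec u)) '' {u : Fin k → ℝ | euclNorm u ≤ 1}) :=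
      ⟨u', by simp [hnu'], rfl⟩
    have hbdd : BddAbove ((fun u => euclNorm (ζ.mulVec u)) '' {u : Fin k → ℝ | euclNorm u ≤ 1}) := by
      refine ⟨Real.sqrt (∑ i, ∑ j, ζ i j ^ 2), ?_⟩
      rintro x ⟨w, hw, rfl⟩
      calc euclNorm (ζ.mulVec w) ≤ Real.sqrt (∑ i, ∑ j, ζ i j ^ 2) * euclNorm w :=
            euclNorm_mulVec_le ζ w
        _ ≤ Real.sqrt (∑ i, ∑ j, ζ i j ^ 2) * 1 := by
            exact mul_le_mul_of_nonneg_left hw (Real.sqrt_nonneg _)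
        _ = _ := mul_one _
    have h1 : euclNorm (ζ *ᵥ u') ≤ ρ := le_trans (le_csSup hbdd hmem) hspec
    have : ζ *ᵥ u = euclNorm u • (ζ *ᵥ u') := by
      rw [hu', Matrix.mulVec_smul, smul_smul, mul_inv_cancel₀ hnu.ne', one_smul]
    rw [this, euclNorm_smul, abs_of_pos hnu]
    calc euclNorm u * euclNorm (ζ *ᵥ u') ≤ euclNorm u * ρ :=
          mul_le_mul_of_nonneg_left h1 hnu.le
      _ = ρ * euclNorm u := mul_comm _ _


variable {p m n : ℕ}

noncomputable def qa (A0 : Matrix (Fin p) (Fin p) ℝ) (z : Fin p → ℝ) : ℝ := z ⬝ᵥ (A0 *ᵥ z)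

noncomputable def qn (M : Matrix (Fin m) (Fin p) ℝ) (z : Fin p → ℝ) : ℝ :=
  (M *ᵥ z) ⬝ᵥ (M *ᵥ z)

noncomputable def qf (A0 : Matrix (Fin p) (Fin p) ℝ) (Lt : Matrix (Fin m) (Fin p) ℝ)
    (Rt : Matrix (Fin n) (Fin p) ℝ) (z : Fin p → ℝ) (t : ℝ) : ℝ :=
  t ^ 2 * qn Rt z - t * qa A0 z + qn Lt z

lemma dot_self_nonneg' {k : ℕ} (v : Fin k → ℝ) : 0 ≤ v ⬝ᵥ v :=
  Finset.sum_nonneg fun i _ => mul_self_nonneg _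

lemma dot_self_pos {k : ℕ} {v : Fin k → ℝ} (hv : v ≠ 0) : 0 < v ⬝ᵥ v := by
  rcases Function.ne_iff.1 hv with ⟨i, hi⟩
  apply Finset.sum_pos' (fun j _ => mul_self_nonneg _)
  have hvi : v i ≠ 0 := by simpa using hi
  exact ⟨i, Finset.mem_univ i, mul_self_pos.2 hvi⟩

lemma qn_nonneg (M : Matrix (Fin m) (Fin p) ℝ) (z : Fin p → ℝ) : 0 ≤ qn M z :=
  dot_self_nonneg' _

lemma dot_mulVec_symm {A0 : Matrix (Fin p) (Fin p) ℝ} (hA0 : A0.IsSymm)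
    (u v : Fin p → ℝ) : u ⬝ᵥ (A0 *ᵥ v) = v ⬝ᵥ (A0 *ᵥ u) := by
  rw [dotProduct_mulVec, ← Matrix.vecMul_transpose, hA0.eq, dotProduct_comm]

lemma qn_expand (M : Matrix (Fin m) (Fin p) ℝ) (s t : ℝ) (u v : Fin p → ℝ) :
    qn M (s • u + t • v)
      = s ^ 2 * qn M u + 2 * s * t * ((M *ᵥ u) ⬝ᵥ (M *ᵥ v)) + t ^ 2 * qn M v := by
  unfold qn
  rw [Matrix.mulVec_add, Matrix.mulVec_smul, Matrix.mulVec_smul]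
  rw [dotProduct_add, add_dotProduct, add_dotProduct, smul_dotProduct, smul_dotProduct,
    smul_dotProduct, smul_dotProduct, dotProduct_smul, dotProduct_smul, dotProduct_smul,
    dotProduct_smul, dotProduct_comm (M *ᵥ v) (M *ᵥ u)]
  simp only [smul_eq_mul]; ring

lemma qa_expand {A0 : Matrix (Fin p) (Fin p) ℝ} (hA0 : A0.IsSymm) (s t : ℝ) (u v : Fin p → ℝ) :
    qa A0 (s • u + t • v)
      = s ^ 2 * qa A0 u + 2 * s * t * (u ⬝ᵥ (A0 *ᵥ v)) + t ^ 2 * qa A0 v := by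
  unfold qa
  rw [Matrix.mulVec_add, Matrix.mulVec_smul, Matrix.mulVec_smul]
  rw [dotProduct_add, add_dotProduct, add_dotProduct, smul_dotProduct, smul_dotProduct,
    smul_dotProduct, smul_dotProduct, dotProduct_smul, dotProduct_smul, dotProduct_smul,
    dotProduct_smul, dot_mulVec_symm hA0 v u]
  simp only [smul_eq_mul]; ring

lemma qf_expand {A0 : Matrix (Fin p) (Fin p) ℝ} (hA0 : A0.IsSymm)
    (Lt : Matrix (Fin m) (Fin p) ℝ) (Rt : Matrix (Fin n) (Fin p) ℝ)
    (lam s t : ℝ) (u v : Fin p → ℝ) :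
    qf A0 Lt Rt (s • u + t • v) lam
      = s ^ 2 * qf A0 Lt Rt u lam
        + 2 * s * t * (lam ^ 2 * ((Rt *ᵥ u) ⬝ᵥ (Rt *ᵥ v)) - lam * (u ⬝ᵥ (A0 *ᵥ v))
            + (Lt *ᵥ u) ⬝ᵥ (Lt *ᵥ v))
        + t ^ 2 * qf A0 Lt Rt v lam := by
  unfold qf
  rw [qn_expand, qn_expand, qa_expand hA0]
  ring

lemma qf_smul {A0 : Matrix (Fin p) (Fin p) ℝ} (hA0 : A0.IsSymm)
    (Lt : Matrix (Fin m) (Fin p) ℝ) (Rt : Matrix (Fin n) (Fin p) ℝ)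
    (lam c : ℝ) (z : Fin p → ℝ) :
    qf A0 Lt Rt (c • z) lam = c ^ 2 * qf A0 Lt Rt z lam := by
  have h := qf_expand hA0 Lt Rt lam c 0 z z
  simp only [zero_smul, add_zero, mul_zero, zero_mul] at h
  rw [h]; ring

lemma qf_neg_pos {A0 : Matrix (Fin p) (Fin p) ℝ} {Lt : Matrix (Fin m) (Fin p) ℝ}
    {Rt : Matrix (Fin n) (Fin p) ℝ} {z : Fin p → ℝ} {lam : ℝ}
    (hq : qf A0 Lt Rt z lam < 0) (hpos : 0 < qa A0 z) : 0 < lam := by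
  by_contra hl
  push_neg at hl
  have h1 : 0 ≤ lam ^ 2 * qn Rt z := mul_nonneg (sq_nonneg _) (qn_nonneg _ _)
  have h2 : 0 ≤ - lam * qa A0 z := mul_nonneg (neg_nonneg.2 hl) hpos.le
  have h3 : 0 ≤ qn Lt z := qn_nonneg _ _
  unfold qf at hq; nlinarith

lemma exists_qf_neg {A0 : Matrix (Fin p) (Fin p) ℝ} {Lt : Matrix (Fin m) (Fin p) ℝ}
    {Rt : Matrix (Fin n) (Fin p) ℝ} {z : Fin p → ℝ}
    (hpos : 0 < qa A0 z) (hD : 4 * qn Lt z * qn Rt z < qa A0 z ^ 2) :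
    ∃ lam : ℝ, qf A0 Lt Rt z lam < 0 := by
  rcases (qn_nonneg Rt z).lt_or_eq with hr | hr
  · refine ⟨qa A0 z / (2 * qn Rt z), ?_⟩
    have heq : qf A0 Lt Rt z (qa A0 z / (2 * qn Rt z))
        = (4 * qn Lt z * qn Rt z - qa A0 z ^ 2) / (4 * qn Rt z) := by
      unfold qf; field_simp; ring
    rw [heq]
    apply div_neg_of_neg_of_pos (by linarith) (by positivity)
  · refine ⟨(qn Lt z + 1) / qa A0 z, ?_⟩
    unfold qf
    rw [← hr, mul_zero, zero_sub, neg_add_eq_sub, sub_neg]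
    rw [div_mul_eq_mul_div, lt_div_iff₀ hpos]
    nlinarith


set_option maxHeartbeats 1000000 in
lemma aux_disjoint {p m n : ℕ} {A0 : Matrix (Fin p) (Fin p) ℝ}
    {Lt : Matrix (Fin m) (Fin p) ℝ} {Rt : Matrix (Fin n) (Fin p) ℝ} (hA0 : A0.IsSymm)
    (H : ∀ z : Fin p → ℝ, z ≠ 0 → 0 < qa A0 z ∧ 4 * qn Lt z * qn Rt z < qa A0 z ^ 2)
    {x y : Fin p → ℝ}
    (hindep : ∀ s t : ℝ, s • x + t • y = 0 → s = 0 ∧ t = 0)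
    (D : ∀ lam : ℝ, ¬(qf A0 Lt Rt x lam < 0 ∧ qf A0 Lt Rt y lam < 0))
    {lx ly : ℝ} (hqx : qf A0 Lt Rt x lx < 0) (hqy : qf A0 Lt Rt y ly < 0)
    (hlt : lx < ly) : False := by
  have hx : x ≠ 0 := by
    intro h; exact absurd ((hindep 1 0 (by simp [h])).1) one_ne_zero
  have hy : y ≠ 0 := by
    intro h; exact absurd ((hindep 0 1 (by simp [h])).2) one_ne_zero
  have hcontx : Continuous fun μ : ℝ => qf A0 Lt Rt x μ := by
    unfold qf; fun_prop
  have hconty : Continuous fun μ : ℝ => qf A0 Lt Rt y μ := by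
    unfold qf; fun_prop
  set W : Set ℝ := {μ : ℝ | μ ∈ Set.Icc lx ly ∧ qf A0 Lt Rt x μ < 0} with hW
  have hWne : lx ∈ W := ⟨⟨le_refl _, hlt.le⟩, hqx⟩
  have hWbdd : BddAbove W := ⟨ly, fun μ hμ => hμ.1.2⟩
  set lb : ℝ := sSup W with hlb
  have hlxlb : lx ≤ lb := le_csSup hWbdd hWne
  have hlbly : lb ≤ ly := csSup_le ⟨lx, hWne⟩ fun μ hμ => hμ.1.2
  have hQxle : qf A0 Lt Rt x lb ≤ 0 := by
    have hcl : IsClosed {μ : ℝ | qf A0 Lt Rt x μ ≤ 0} := isClosed_le hcontx continuous_const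
    have h1 : lb ∈ closure W := csSup_mem_closure ⟨lx, hWne⟩ hWbdd
    have h2 : closure W ⊆ {μ : ℝ | qf A0 Lt Rt x μ ≤ 0} :=
      hcl.closure_subset_iff.2 fun μ hμ => le_of_lt hμ.2
    exact h2 h1
  have hQx0 : qf A0 Lt Rt x lb = 0 := by
    rcases hQxle.lt_or_eq with hneg | h0
    · exfalso
      have hlbly' : lb < ly := by
        rcases hlbly.lt_or_eq with h | h
        · exact h
        · exact absurd ⟨hneg, by rw [h]; exact hqy⟩ (D lb)
      have hopen : IsOpen {μ : ℝ | qf A0 Lt Rt x μ < 0} := isOpen_lt hcontx continuous_const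
      obtain ⟨ε, hε, hball⟩ := Metric.isOpen_iff.1 hopen lb hneg
      set μ := min (lb + ε / 2) ((lb + ly) / 2) with hμdef
      have hμgt : lb < μ := lt_min (by linarith) (by linarith)
      have hμlt : μ ≤ ly := le_trans (min_le_right _ _) (by linarith)
      have hμball : μ ∈ Metric.ball lb ε := by
        rw [Metric.mem_ball, Real.dist_eq, abs_of_pos (by linarith)]
        have : μ ≤ lb + ε / 2 := min_le_left _ _
        linarith
      have hμW : μ ∈ W := ⟨⟨by linarith, hμlt⟩, hball hμball⟩
      exact absurd (le_csSup hWbdd hμW) (not_le.2 hμgt)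
    · exact h0
  have hlxlb' : lx < lb := by
    rcases hlxlb.lt_or_eq with h | h
    · exact h
    · exfalso; rw [← h] at hQx0; linarith
  have hQy0 : 0 ≤ qf A0 Lt Rt y lb := by
    by_contra hneg
    push_neg at hneg
    have hopen : IsOpen {μ : ℝ | qf A0 Lt Rt y μ < 0} := isOpen_lt hconty continuous_const
    obtain ⟨ε, hε, hball⟩ := Metric.isOpen_iff.1 hopen lb hneg
    obtain ⟨w, hwW, hwgt⟩ := exists_lt_of_lt_csSup ⟨lx, hWne⟩ (show lb - ε < lb by linarith)
    have hwle : w ≤ lb := le_csSup hWbdd hwW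
    have hwball : w ∈ Metric.ball lb ε := by
      rw [Metric.mem_ball, Real.dist_eq, abs_lt]
      constructor <;> linarith
    exact D w ⟨hwW.2, hball hwball⟩
  have hlbly2 : lb < ly := by
    rcases hlbly.lt_or_eq with h | h
    · exact h
    · exfalso; rw [h] at hQy0; linarith
  -- slope signs
  have hdx : 0 < 2 * lb * qn Rt x - qa A0 x := by
    by_contra hcon
    push_neg at hcon
    have hid : qf A0 Lt Rt x lx - qf A0 Lt Rt x lb
        = (lx - lb) * (qn Rt x * (lx + lb) - qa A0 x) := by unfold qf; ring
    have hrx : 0 ≤ qn Rt x := qn_nonneg _ _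
    nlinarith [mul_nonneg hrx (sub_nonneg.2 hlxlb'.le)]
  have hdy : 2 * lb * qn Rt y - qa A0 y < 0 := by
    have hid : qf A0 Lt Rt y ly - qf A0 Lt Rt y lb
        = (ly - lb) * (qn Rt y * (ly + lb) - qa A0 y) := by unfold qf; ring
    have hry : 0 ≤ qn Rt y := qn_nonneg _ _
    nlinarith [mul_nonneg hry (sub_nonneg.2 hlbly2.le)]
  set dx := 2 * lb * qn Rt x - qa A0 x with hdxdef
  set dy := 2 * lb * qn Rt y - qa A0 y with hdydef
  set Bq := lb ^ 2 * ((Rt *ᵥ x) ⬝ᵥ (Rt *ᵥ y)) - lb * (x ⬝ᵥ (A0 *ᵥ y))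
      + (Lt *ᵥ x) ⬝ᵥ (Lt *ᵥ y) with hBqdef
  set Bd := 2 * lb * ((Rt *ᵥ x) ⬝ᵥ (Rt *ᵥ y)) - x ⬝ᵥ (A0 *ᵥ y) with hBddef
  set σ : ℝ := if 0 ≤ Bq then 1 else -1 with hσdef
  have hσsq : σ ^ 2 = 1 := by rw [hσdef]; split_ifs <;> norm_num
  have hσne : σ ≠ 0 := by rw [hσdef]; split_ifs <;> norm_num
  have hσB : 0 ≤ σ * Bq := by
    rw [hσdef]; split_ifs with h
    · simpa using h
    · push_neg at h; nlinarith
  set g : ℝ → ℝ := fun t => (1 - t) ^ 2 * dx + 2 * (1 - t) * (t * σ) * Bd + (t * σ) ^ 2 * dy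
    with hgdef
  have hg0 : g 0 = dx := by simp [hgdef]
  have hg1 : g 1 = dy := by
    have : g 1 = σ ^ 2 * dy := by simp [hgdef]
    rw [this, hσsq, one_mul]
  have hgcont : ContinuousOn g (Set.Icc (0:ℝ) 1) := by
    apply Continuous.continuousOn; rw [hgdef]; fun_prop
  have hmem : (0:ℝ) ∈ Set.Icc (g 1) (g 0) := by
    rw [hg0, hg1]; exact ⟨hdy.le, hdx.le⟩
  obtain ⟨t0, ht0, hgt0⟩ := intermediate_value_Icc' (by norm_num : (0:ℝ) ≤ 1) hgcont hmem
  set z0 : Fin p → ℝ := (1 - t0) • x + (t0 * σ) • y with hz0def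
  have hz0 : z0 ≠ 0 := by
    intro h
    obtain ⟨h1, h2⟩ := hindep _ _ h
    have ht01 : t0 = 1 := by linarith
    rw [ht01, one_mul] at h2
    exact hσne h2
  -- expansion of the slope form at z0
  have hqnz0 : qn Rt z0 = (1 - t0) ^ 2 * qn Rt x
      + 2 * (1 - t0) * (t0 * σ) * ((Rt *ᵥ x) ⬝ᵥ (Rt *ᵥ y)) + (t0 * σ) ^ 2 * qn Rt y :=
    qn_expand Rt _ _ x y
  have hqaz0 : qa A0 z0 = (1 - t0) ^ 2 * qa A0 x
      + 2 * (1 - t0) * (t0 * σ) * (x ⬝ᵥ (A0 *ᵥ y)) + (t0 * σ) ^ 2 * qa A0 y :=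
    qa_expand hA0 _ _ x y
  have hδz0 : 2 * lb * qn Rt z0 - qa A0 z0 = 0 := by
    have : 2 * lb * qn Rt z0 - qa A0 z0 = g t0 := by
      rw [hqnz0, hqaz0, hgdef, hdxdef, hdydef, hBddef]; ring
    rw [this, hgt0]
  have hQz0 : 0 ≤ qf A0 Lt Rt z0 lb := by
    have hexp := qf_expand hA0 Lt Rt lb (1 - t0) (t0 * σ) x y
    rw [← hz0def] at hexp
    rw [hexp, hQx0]
    have h1 : 0 ≤ 2 * (1 - t0) * (t0 * σ) * Bq → True := fun _ => trivial
    have hcross : 2 * (1 - t0) * (t0 * σ) * (lb ^ 2 * ((Rt *ᵥ x) ⬝ᵥ (Rt *ᵥ y))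
        - lb * (x ⬝ᵥ (A0 *ᵥ y)) + (Lt *ᵥ x) ⬝ᵥ (Lt *ᵥ y))
        = (2 * (1 - t0) * t0) * (σ * Bq) := by rw [hBqdef]; ring
    rw [hcross]
    have ht00 : 0 ≤ t0 := ht0.1
    have ht01 : t0 ≤ 1 := ht0.2
    have : 0 ≤ (2 * (1 - t0) * t0) * (σ * Bq) :=
      mul_nonneg (by nlinarith) hσB
    nlinarith [sq_nonneg (t0 * σ), mul_nonneg (sq_nonneg (t0 * σ)) hQy0]
  obtain ⟨hpos0, hD0⟩ := H z0 hz0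
  have haz : qa A0 z0 = 2 * lb * qn Rt z0 := by linarith
  have hQz0' : 0 ≤ lb ^ 2 * qn Rt z0 - lb * qa A0 z0 + qn Lt z0 := hQz0
  rw [haz] at hQz0'
  have hlz : lb ^ 2 * qn Rt z0 ≤ qn Lt z0 := by nlinarith
  have hrz : 0 ≤ qn Rt z0 := qn_nonneg _ _
  rw [haz] at hD0
  nlinarith [mul_le_mul_of_nonneg_right hlz hrz]

lemma pairwise_lemma {p m n : ℕ} {A0 : Matrix (Fin p) (Fin p) ℝ}
    {Lt : Matrix (Fin m) (Fin p) ℝ} {Rt : Matrix (Fin n) (Fin p) ℝ} (hA0 : A0.IsSymm)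
    (H : ∀ z : Fin p → ℝ, z ≠ 0 → 0 < qa A0 z ∧ 4 * qn Lt z * qn Rt z < qa A0 z ^ 2)
    {x y : Fin p → ℝ} (hx : x ≠ 0) (hy : y ≠ 0) :
    ∃ lam : ℝ, qf A0 Lt Rt x lam < 0 ∧ qf A0 Lt Rt y lam < 0 := by
  by_cases hdep : ∃ cc : ℝ, y = cc • x
  · obtain ⟨cc, rfl⟩ := hdep
    have hcc : cc ≠ 0 := by rintro rfl; simp at hy
    obtain ⟨lam, hlam⟩ := exists_qf_neg (Lt := Lt) (Rt := Rt) (H x hx).1 (H x hx).2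
    refine ⟨lam, hlam, ?_⟩
    rw [qf_smul hA0]
    exact mul_neg_of_pos_of_neg (by positivity) hlam
  · have hindep : ∀ s t : ℝ, s • x + t • y = 0 → s = 0 ∧ t = 0 := by
      intro s t hst
      by_cases ht : t = 0
      · subst ht
        rw [zero_smul, add_zero] at hst
        rcases smul_eq_zero.1 hst with h | h
        · exact ⟨h, rfl⟩
        · exact absurd h hx
      · exfalso
        apply hdep
        have h1 : t • y = -(s • x) := eq_neg_of_add_eq_zero_left (by rwa [add_comm] at hst)
        refine ⟨-(t⁻¹ * s), ?_⟩
        calc y = t⁻¹ • (t • y) := (inv_smul_smul₀ ht y).symm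
          _ = t⁻¹ • (-(s • x)) := by rw [h1]
          _ = (-(t⁻¹ * s)) • x := by rw [smul_neg, smul_smul, neg_smul]
    by_contra hno
    have D : ∀ lam : ℝ, ¬(qf A0 Lt Rt x lam < 0 ∧ qf A0 Lt Rt y lam < 0) :=
      fun lam h => hno ⟨lam, h⟩
    obtain ⟨lx, hqx⟩ := exists_qf_neg (Lt := Lt) (Rt := Rt) (H x hx).1 (H x hx).2
    obtain ⟨ly, hqy⟩ := exists_qf_neg (Lt := Lt) (Rt := Rt) (H y hy).1 (H y hy).2
    rcases lt_trichotomy lx ly with h | h | h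
    · exact aux_disjoint hA0 H hindep D hqx hqy h
    · exact hno ⟨lx, hqx, by rw [h]; exact hqy⟩
    · have hindep' : ∀ s t : ℝ, s • y + t • x = 0 → s = 0 ∧ t = 0 := by
        intro s t hst
        exact (hindep t s (by rwa [add_comm] at hst)).symm
      have D' : ∀ lam : ℝ, ¬(qf A0 Lt Rt y lam < 0 ∧ qf A0 Lt Rt x lam < 0) :=
        fun lam hh => D lam ⟨hh.2, hh.1⟩
      exact aux_disjoint hA0 H hindep' D' hqy hqx h

noncomputable def sdf {p m n : ℕ} (A0 : Matrix (Fin p) (Fin p) ℝ)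
    (Lt : Matrix (Fin m) (Fin p) ℝ) (Rt : Matrix (Fin n) (Fin p) ℝ) (z : Fin p → ℝ) : ℝ :=
  Real.sqrt (qa A0 z ^ 2 - 4 * qn Lt z * qn Rt z)

lemma bounds_of_qf_neg {p m n : ℕ} {A0 : Matrix (Fin p) (Fin p) ℝ}
    {Lt : Matrix (Fin m) (Fin p) ℝ} {Rt : Matrix (Fin n) (Fin p) ℝ} {z : Fin p → ℝ} {lam : ℝ}
    (hpos : 0 < qa A0 z) (hD : 4 * qn Lt z * qn Rt z < qa A0 z ^ 2)
    (hq : qf A0 Lt Rt z lam < 0) :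
    2 * qn Lt z < lam * (qa A0 z + sdf A0 Lt Rt z) ∧
      lam * (2 * qn Rt z) < qa A0 z + sdf A0 Lt Rt z := by
  have hlam : 0 < lam := qf_neg_pos hq hpos
  set a := qa A0 z with hadef
  set l := qn Lt z with hldef
  set r := qn Rt z with hrdef
  set sd := sdf A0 Lt Rt z with hsddef
  have hl : 0 ≤ l := qn_nonneg _ _
  have hr : 0 ≤ r := qn_nonneg _ _
  have hq' : lam ^ 2 * r - lam * a + l < 0 := hq
  have hsd0 : 0 ≤ sd := Real.sqrt_nonneg _
  have hsd : sd ^ 2 = a ^ 2 - 4 * l * r := Real.sq_sqrt (by nlinarith)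
  have hsdpos : 0 < sd := Real.sqrt_pos.2 (by nlinarith)
  constructor
  · rcases le_or_gt l (lam ^ 2 * r) with hc | hc
    · nlinarith [mul_nonneg hlam.le hsd0]
    · have h1 : l + lam ^ 2 * r < lam * a := by nlinarith
      have h0 : 0 ≤ l + lam ^ 2 * r := by nlinarith [mul_nonneg (sq_nonneg lam) hr]
      have h2 : (l + lam ^ 2 * r) ^ 2 < (lam * a) ^ 2 := by
        nlinarith [mul_self_lt_mul_self h0 h1]
      have hsd2 : lam ^ 2 * sd ^ 2 = lam ^ 2 * (a ^ 2 - 4 * l * r) := by rw [hsd]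
      have key : (l - lam ^ 2 * r) ^ 2 ≤ (lam * sd) ^ 2 := by nlinarith
      have h3 : l - lam ^ 2 * r ≤ lam * sd := by
        by_contra hcon
        push_neg at hcon
        have := mul_self_lt_mul_self (mul_nonneg hlam.le hsd0) hcon
        nlinarith
      linarith
  · rcases le_or_gt (lam * (2 * r)) a with hc | hc
    · linarith
    · have hrpos : 0 < r := by nlinarith
      have hmul : 4 * r * (lam ^ 2 * r - lam * a + l) < 0 :=
        mul_neg_of_pos_of_neg (by linarith) hq'
      by_contra hcon
      push_neg at hcon
      have hsq : sd * sd ≤ (2 * lam * r - a) * (2 * lam * r - a) :=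
        mul_self_le_mul_self hsd0 (by linarith)
      nlinarith

lemma qf_neg_of_bounds {p m n : ℕ} {A0 : Matrix (Fin p) (Fin p) ℝ}
    {Lt : Matrix (Fin m) (Fin p) ℝ} {Rt : Matrix (Fin n) (Fin p) ℝ} {z : Fin p → ℝ} {lam : ℝ}
    (hpos : 0 < qa A0 z) (hD : 4 * qn Lt z * qn Rt z < qa A0 z ^ 2)
    (h1 : 2 * qn Lt z < lam * (qa A0 z + sdf A0 Lt Rt z))
    (h2 : lam * (2 * qn Rt z) < qa A0 z + sdf A0 Lt Rt z) :
    qf A0 Lt Rt z lam < 0 := by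
  set a := qa A0 z with hadef
  set l := qn Lt z with hldef
  set r := qn Rt z with hrdef
  set sd := sdf A0 Lt Rt z with hsddef
  have hl : 0 ≤ l := qn_nonneg _ _
  have hr : 0 ≤ r := qn_nonneg _ _
  have hsd0 : 0 ≤ sd := Real.sqrt_nonneg _
  have hsd : sd ^ 2 = a ^ 2 - 4 * l * r := Real.sq_sqrt (by nlinarith)
  have hasd : 0 < a + sd := by linarith
  have hsdl : lam * sd ^ 2 = lam * (a ^ 2 - 4 * l * r) := by rw [hsd]
  have P : 0 < (a + sd - lam * (2 * r)) * (lam * (a + sd) - 2 * l) :=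
    mul_pos (by linarith) (by linarith)
  show lam ^ 2 * r - lam * a + l < 0
  by_contra hg
  push_neg at hg
  have hmul : 0 ≤ 2 * (a + sd) * (lam ^ 2 * r - lam * a + l) :=
    mul_nonneg (by linarith) hg
  nlinarith

set_option maxHeartbeats 1000000 in
lemma uniform_lemma {p m n : ℕ} (hp : 0 < p) {A0 : Matrix (Fin p) (Fin p) ℝ}
    {Lt : Matrix (Fin m) (Fin p) ℝ} {Rt : Matrix (Fin n) (Fin p) ℝ} (hA0 : A0.IsSymm)
    (H : ∀ z : Fin p → ℝ, z ≠ 0 → 0 < qa A0 z ∧ 4 * qn Lt z * qn Rt z < qa A0 z ^ 2) :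
    ∃ lam : ℝ, 0 < lam ∧ ∀ z : Fin p → ℝ, z ≠ 0 → qf A0 Lt Rt z lam < 0 := by
  set S : Set (Fin p → ℝ) := {z | ∑ i, z i ^ 2 = 1} with hSdef
  have hsum_cont : Continuous fun z : Fin p → ℝ => ∑ i, z i ^ 2 := by
    apply continuous_finset_sum
    intro i _
    exact (continuous_apply i).pow 2
  have hqa_cont : Continuous fun z : Fin p → ℝ => qa A0 z := by
    have : (fun z : Fin p → ℝ => qa A0 z)
        = fun z => ∑ i, z i * ∑ j, A0 i j * z j := rfl
    rw [this]
    apply continuous_finset_sum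
    intro i _
    exact (continuous_apply i).mul
      (continuous_finset_sum _ fun j _ => (continuous_const.mul (continuous_apply j)))
  have hqn_cont : ∀ (k : ℕ) (M : Matrix (Fin k) (Fin p) ℝ),
      Continuous fun z : Fin p → ℝ => qn M z := by
    intro k M
    have : (fun z : Fin p → ℝ => qn M z)
        = fun z => ∑ i, (∑ j, M i j * z j) * ∑ j, M i j * z j := rfl
    rw [this]
    apply continuous_finset_sum
    intro i _
    exact (continuous_finset_sum _ fun j _ => (continuous_const.mul (continuous_apply j))).mul
      (continuous_finset_sum _ fun j _ => (continuous_const.mul (continuous_apply j)))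
  have hsd_cont : Continuous fun z : Fin p → ℝ => sdf A0 Lt Rt z :=
    Real.continuous_sqrt.comp
      (((hqa_cont.pow 2).sub ((continuous_const.mul (hqn_cont m Lt)).mul (hqn_cont n Rt))))
  have hz_ne : ∀ z ∈ S, z ≠ 0 := by
    intro z hz h0
    rw [hSdef] at hz
    simp only [Set.mem_setOf_eq, h0] at hz
    simp at hz
  have hden_pos : ∀ z ∈ S, 0 < qa A0 z + sdf A0 Lt Rt z := fun z hz =>
    add_pos_of_pos_of_nonneg (H z (hz_ne z hz)).1 (Real.sqrt_nonneg _)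
  have hSclosed : IsClosed S := isClosed_eq hsum_cont continuous_const
  have hSsub : S ⊆ Metric.closedBall 0 1 := by
    intro z hz
    rw [Metric.mem_closedBall, dist_zero_right]
    rw [pi_norm_le_iff_of_nonneg zero_le_one]
    intro i
    rw [Real.norm_eq_abs, ← sq_le_one_iff_abs_le_one]
    calc z i ^ 2 ≤ ∑ j, z j ^ 2 :=
          Finset.single_le_sum (fun j _ => sq_nonneg (z j)) (Finset.mem_univ i)
      _ = 1 := hz
  have hScomp : IsCompact S :=
    (isCompact_closedBall (0 : Fin p → ℝ) 1).of_isClosed_subset hSclosed hSsub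
  have hSne : S.Nonempty := by
    refine ⟨fun i => if i = ⟨0, hp⟩ then 1 else 0, ?_⟩
    show (∑ i, (if i = (⟨0, hp⟩ : Fin p) then (1:ℝ) else 0) ^ 2) = 1
    rw [Finset.sum_congr rfl (g := fun i => if i = (⟨0, hp⟩ : Fin p) then (1:ℝ) else 0)
      (fun i _ => by split_ifs with h <;> simp [h])]
    simp
  have halp_cont : ContinuousOn (fun z => 2 * qn Lt z / (qa A0 z + sdf A0 Lt Rt z)) S :=
    ContinuousOn.div (continuous_const.mul (hqn_cont m Lt)).continuousOn
      (hqa_cont.add hsd_cont).continuousOn fun z hz => (hden_pos z hz).ne'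
  have hgam_cont : ContinuousOn (fun z => 2 * qn Rt z / (qa A0 z + sdf A0 Lt Rt z)) S :=
    ContinuousOn.div (continuous_const.mul (hqn_cont n Rt)).continuousOn
      (hqa_cont.add hsd_cont).continuousOn fun z hz => (hden_pos z hz).ne'
  obtain ⟨xs, hxS, hxmax⟩ := hScomp.exists_isMaxOn hSne halp_cont
  obtain ⟨ys, hyS, hymax⟩ := hScomp.exists_isMaxOn hSne hgam_cont
  obtain ⟨lam, hqx, hqy⟩ := pairwise_lemma hA0 H (hz_ne _ hxS) (hz_ne _ hyS)
  have hlam : 0 < lam := qf_neg_pos hqx (H _ (hz_ne _ hxS)).1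
  refine ⟨lam, hlam, ?_⟩
  have hkey : ∀ z ∈ S, qf A0 Lt Rt z lam < 0 := by
    intro z hz
    obtain ⟨hpz, hDz⟩ := H z (hz_ne z hz)
    obtain ⟨hpx, hDx⟩ := H xs (hz_ne _ hxS)
    obtain ⟨hpy, hDy⟩ := H ys (hz_ne _ hyS)
    have hbx := (bounds_of_qf_neg hpx hDx hqx).1
    have hby := (bounds_of_qf_neg hpy hDy hqy).2
    have h1 : 2 * qn Lt xs / (qa A0 xs + sdf A0 Lt Rt xs) < lam :=
      (div_lt_iff₀ (hden_pos _ hxS)).2 hbx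
    have h2 : lam * (2 * qn Rt ys / (qa A0 ys + sdf A0 Lt Rt ys)) < 1 := by
      rw [mul_div_assoc']
      exact (div_lt_one (hden_pos _ hyS)).2 hby
    have hz1 : 2 * qn Lt z / (qa A0 z + sdf A0 Lt Rt z)
        ≤ 2 * qn Lt xs / (qa A0 xs + sdf A0 Lt Rt xs) := hxmax hz
    have hz2 : 2 * qn Rt z / (qa A0 z + sdf A0 Lt Rt z)
        ≤ 2 * qn Rt ys / (qa A0 ys + sdf A0 Lt Rt ys) := hymax hz
    apply qf_neg_of_bounds hpz hDz
    · rw [← div_lt_iff₀ (hden_pos _ hz)]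
      exact lt_of_le_of_lt hz1 h1
    · rw [← div_lt_one (hden_pos _ hz), ← mul_div_assoc']
      calc lam * (2 * qn Rt z / (qa A0 z + sdf A0 Lt Rt z))
          ≤ lam * (2 * qn Rt ys / (qa A0 ys + sdf A0 Lt Rt ys)) :=
            mul_le_mul_of_nonneg_left hz2 hlam.le
        _ < 1 := h2
  intro z hz
  have hsum_pos : 0 < ∑ i, z i ^ 2 := by
    have h := dot_self_pos hz
    rw [dot_self_eq] at h
    exact h
  set nz := Real.sqrt (∑ i, z i ^ 2) with hnzdef
  have hnz : 0 < nz := Real.sqrt_pos.2 hsum_pos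
  set w : Fin p → ℝ := nz⁻¹ • z with hwdef
  have hnz2 : nz ^ 2 = ∑ i, z i ^ 2 := by rw [hnzdef]; exact Real.sq_sqrt hsum_pos.le
  have hwS : w ∈ S := by
    rw [hSdef]
    simp only [Set.mem_setOf_eq, hwdef, Pi.smul_apply, smul_eq_mul, mul_pow]
    rw [← Finset.mul_sum, inv_pow, hnz2]
    exact inv_mul_cancel₀ hsum_pos.ne'
  have hzw : z = nz • w := by rw [hwdef, smul_inv_smul₀ hnz.ne']
  rw [hzw, qf_smul hA0]
  exact mul_neg_of_pos_of_neg (by positivity) (hkey w hwS)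

lemma dot_transpose_mulVec {k l : ℕ} (M : Matrix (Fin k) (Fin l) ℝ) (v : Fin l → ℝ)
    (w : Fin k → ℝ) : v ⬝ᵥ (Mᵀ *ᵥ w) = (M *ᵥ v) ⬝ᵥ w := by
  rw [dotProduct_mulVec, Matrix.vecMul_transpose]

lemma real_conjTranspose {α β : Type*} (M : Matrix α β ℝ) : Mᴴ = Mᵀ := by
  ext i j
  simp [Matrix.conjTranspose_apply]

lemma posdef_apply {k : Type*} [Fintype k] {M : Matrix k k ℝ} (hM : M.PosDef)
    {z : k → ℝ} (hz : z ≠ 0) : 0 < z ⬝ᵥ (M *ᵥ z) := by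
  have := (posDef_iff_dotProduct_mulVec.mp hM).2 hz
  simpa using this

lemma qn_smul_mat {k l : ℕ} (ρ : ℝ) (M : Matrix (Fin k) (Fin l) ℝ) (z : Fin l → ℝ) :
    qn (ρ • M) z = ρ ^ 2 * qn M z := by
  unfold qn
  rw [Matrix.smul_mulVec, smul_dotProduct, dotProduct_smul]
  simp only [smul_eq_mul]; ring

lemma lmi_value {pp aa cc : ℕ} (A0 : Matrix (Fin pp) (Fin pp) ℝ)
    (L : Matrix (Fin aa) (Fin pp) ℝ) (R : Matrix (Fin cc) (Fin pp) ℝ)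
    (ζ : Matrix (Fin aa) (Fin cc) ℝ) (z : Fin pp → ℝ) :
    z ⬝ᵥ ((A0 + L.transpose * ζ * R + R.transpose * ζ.transpose * L) *ᵥ z)
      = qa A0 z + 2 * ((L *ᵥ z) ⬝ᵥ (ζ *ᵥ (R *ᵥ z))) := by
  have hX : z ⬝ᵥ ((L.transpose * ζ * R) *ᵥ z) = (L *ᵥ z) ⬝ᵥ (ζ *ᵥ (R *ᵥ z)) := by
    rw [← Matrix.mulVec_mulVec, ← Matrix.mulVec_mulVec, dot_transpose_mulVec]
  have hY : z ⬝ᵥ ((R.transpose * ζ.transpose * L) *ᵥ z) = (L *ᵥ z) ⬝ᵥ (ζ *ᵥ (R *ᵥ z)) := by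
    rw [← Matrix.mulVec_mulVec, ← Matrix.mulVec_mulVec, dot_transpose_mulVec,
      dot_transpose_mulVec, dotProduct_comm]
  rw [Matrix.add_mulVec, Matrix.add_mulVec, dotProduct_add, dotProduct_add, hX, hY]
  show qa A0 z + _ + _ = _
  ring

lemma block_value {pp aa cc : ℕ} (A0 : Matrix (Fin pp) (Fin pp) ℝ)
    (L : Matrix (Fin aa) (Fin pp) ℝ) (R : Matrix (Fin cc) (Fin pp) ℝ)
    (lam ρ : ℝ) (u : Fin aa → ℝ) (v : Fin pp → ℝ) :
    (Sum.elim u v) ⬝ᵥ ((Matrix.fromBlocks (lam • (1 : Matrix (Fin aa) (Fin aa) ℝ)) (ρ • L)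
          (ρ • L.transpose) (A0 - lam • (R.transpose * R))) *ᵥ (Sum.elim u v))
      = lam * (u ⬝ᵥ u) + 2 * ρ * (u ⬝ᵥ (L *ᵥ v)) + qa A0 v - lam * qn R v := by
  have t1 : u ⬝ᵥ ((lam • (1 : Matrix (Fin aa) (Fin aa) ℝ)) *ᵥ u) = lam * (u ⬝ᵥ u) := by
    rw [Matrix.smul_mulVec, Matrix.one_mulVec, dotProduct_smul, smul_eq_mul]
  have t2 : u ⬝ᵥ ((ρ • L) *ᵥ v) = ρ * (u ⬝ᵥ (L *ᵥ v)) := by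
    rw [Matrix.smul_mulVec, dotProduct_smul, smul_eq_mul]
  have t3 : v ⬝ᵥ ((ρ • L.transpose) *ᵥ u) = ρ * (u ⬝ᵥ (L *ᵥ v)) := by
    rw [Matrix.smul_mulVec, dotProduct_smul, smul_eq_mul, dot_transpose_mulVec,
      dotProduct_comm]
  have t4 : v ⬝ᵥ ((A0 - lam • (R.transpose * R)) *ᵥ v) = qa A0 v - lam * qn R v := by
    rw [Matrix.sub_mulVec, dotProduct_sub, Matrix.smul_mulVec, dotProduct_smul,
      smul_eq_mul, ← Matrix.mulVec_mulVec, dot_transpose_mulVec]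
    rfl
  rw [Matrix.fromBlocks_mulVec]
  simp only [Sum.elim_comp_inl, Sum.elim_comp_inr]
  rw [sumElim_dotProduct_sumElim, dotProduct_add, dotProduct_add, t1, t2, t3, t4]
  ring

lemma qa_zero {k : ℕ} (M : Matrix (Fin k) (Fin k) ℝ) : qa M 0 = 0 := by
  unfold qa; simp

lemma qn_zero {k l : ℕ} (M : Matrix (Fin k) (Fin l) ℝ) : qn M 0 = 0 := by
  unfold qn; simp

end RobustSDP


open RobustSDP

set_option maxHeartbeats 1000000

/-- the robust LMI `A₀ + Lᵀ ζ R + Rᵀ ζᵀ L ≻ 0` for all `ζ` with spectral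
norm `‖ζ‖₂,₂ ≤ ρ` holds iff there exists `λ` making the block matrix
`[[λI_a, ρL]; [ρLᵀ, A₀ − λRᵀR]]` positive definite. -/
theorem robust_sdp_reformulation
    {p a c : ℕ} (hp : 0 < p) (ha : 0 < a) (hc : 0 < c)
    (A0 : Matrix (Fin p) (Fin p) ℝ) (hA0 : A0.IsSymm)
    (L : Matrix (Fin a) (Fin p) ℝ) (R : Matrix (Fin c) (Fin p) ℝ)
    (ρ : ℝ) (hρ : 0 < ρ) :
    (∀ ζ : Matrix (Fin a) (Fin c) ℝ, specNorm ζ ≤ ρ →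
        (A0 + L.transpose * ζ * R + R.transpose * ζ.transpose * L).PosDef) ↔
      ∃ lam : ℝ,
        (Matrix.fromBlocks (lam • (1 : Matrix (Fin a) (Fin a) ℝ)) (ρ • L)
          (ρ • L.transpose) (A0 - lam • (R.transpose * R))).PosDef := by
  constructor
  · intro hrob
    have hspec0 : specNorm (0 : Matrix (Fin a) (Fin c) ℝ) ≤ ρ := by
      apply specNorm_le _ hρ.le
      intro u hu
      rw [Matrix.zero_mulVec, euclNorm_zero]
      exact hρ.le
    have hA0pd : A0.PosDef := by
      have := hrob 0 hspec0
      simpa using this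
    have H : ∀ z : Fin p → ℝ, z ≠ 0 → 0 < qa A0 z ∧
        4 * qn (ρ • L) z * qn R z < qa A0 z ^ 2 := by
      intro z hz
      have hposz : 0 < qa A0 z := posdef_apply hA0pd hz
      refine ⟨hposz, ?_⟩
      rw [qn_smul_mat]
      have hqa2 : 0 < qa A0 z ^ 2 := pow_pos hposz 2
      by_cases hL0 : L *ᵥ z = 0
      · have hl : qn L z = 0 := by unfold qn; rw [hL0]; simp
        rw [hl]; nlinarith [qn_nonneg R z]
      by_cases hR0 : R *ᵥ z = 0
      · have hr : qn R z = 0 := by unfold qn; rw [hR0]; simp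
        rw [hr]; nlinarith [qn_nonneg L z, mul_nonneg (sq_nonneg ρ) (qn_nonneg L z)]
      set Lz := L *ᵥ z with hLzdef
      set Rz := R *ᵥ z with hRzdef
      set nl := euclNorm Lz with hnldef
      set nr := euclNorm Rz with hnrdef
      have hnl : 0 < nl := euclNorm_pos hL0
      have hnr : 0 < nr := euclNorm_pos hR0
      set c₀ : ℝ := -ρ / (nl * nr) with hc₀def
      set ζ0 : Matrix (Fin a) (Fin c) ℝ := Matrix.of fun i j => c₀ * Lz i * Rz j with hζ0def
      have hζmul : ∀ u : Fin c → ℝ, ζ0 *ᵥ u = (c₀ * (Rz ⬝ᵥ u)) • Lz := by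
        intro u
        funext i
        show (∑ j, (c₀ * Lz i * Rz j) * u j) = _
        simp only [Pi.smul_apply, smul_eq_mul, dotProduct]
        rw [Finset.mul_sum, Finset.sum_mul]
        apply Finset.sum_congr rfl
        intros
        ring
      have habs : |c₀| = ρ / (nl * nr) := by
        rw [hc₀def, abs_div, abs_neg, abs_of_pos hρ, abs_of_pos (mul_pos hnl hnr)]
      have hζspec : specNorm ζ0 ≤ ρ := by
        apply specNorm_le _ hρ.le
        intro u hu
        rw [hζmul u, euclNorm_smul]
        have h1 : |c₀ * (Rz ⬝ᵥ u)| ≤ (ρ / (nl * nr)) * (nr * euclNorm u) := by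
          rw [abs_mul, habs]
          exact mul_le_mul le_rfl (abs_dot_le Rz u) (abs_nonneg _) (by positivity)
        calc |c₀ * (Rz ⬝ᵥ u)| * nl ≤ ((ρ / (nl * nr)) * (nr * euclNorm u)) * nl :=
              mul_le_mul_of_nonneg_right h1 (euclNorm_nonneg _)
          _ = ρ * euclNorm u := by field_simp
          _ ≤ ρ * 1 := mul_le_mul_of_nonneg_left hu hρ.le
          _ = ρ := mul_one ρ
      have hpd := posdef_apply (hrob ζ0 hζspec) hz
      rw [lmi_value] at hpd
      have hζR : ζ0 *ᵥ Rz = (c₀ * nr ^ 2) • Lz := by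
        rw [hζmul, hnrdef, euclNorm_sq_dot]
      have hcross : Lz ⬝ᵥ (ζ0 *ᵥ Rz) = -(ρ * nl * nr) := by
        rw [hζR, dotProduct_smul, smul_eq_mul]
        have hLL : Lz ⬝ᵥ Lz = nl ^ 2 := (euclNorm_sq_dot Lz).symm
        rw [hLL, hc₀def]
        field_simp
      rw [← hLzdef, ← hRzdef, hcross] at hpd
      have hql : qn L z = nl ^ 2 := by
        rw [hnldef, euclNorm_sq_dot, hLzdef]; rfl
      have hqr : qn R z = nr ^ 2 := by
        rw [hnrdef, euclNorm_sq_dot, hRzdef]; rfl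
      rw [hql, hqr]
      have h2 : 2 * (ρ * nl * nr) < qa A0 z := by linarith
      have h3 := mul_self_lt_mul_self (by positivity) h2
      nlinarith [h3]
    obtain ⟨lam, hlam, hall⟩ := uniform_lemma hp hA0 H
    refine ⟨lam, posDef_iff_dotProduct_mulVec.mpr ⟨?_, ?_⟩⟩
    · show _ᴴ = _
      rw [real_conjTranspose, Matrix.fromBlocks_transpose]
      rw [Matrix.transpose_smul, Matrix.transpose_one, Matrix.transpose_smul,
        Matrix.transpose_smul, Matrix.transpose_transpose, Matrix.transpose_sub,
        Matrix.transpose_smul, Matrix.transpose_mul, Matrix.transpose_transpose, hA0.eq]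
    · intro w hw
      have hstar : star w = w := by
        funext s; simp
      rw [hstar]
      set u : Fin a → ℝ := w ∘ Sum.inl with hudef
      set v : Fin p → ℝ := w ∘ Sum.inr with hvdef
      have hw' : w = Sum.elim u v := by
        funext s; cases s <;> rfl
      rw [hw', block_value]
      by_cases hv : v = 0
      · have hu : u ≠ 0 := by
          intro h0
          apply hw
          rw [hw', h0, hv]
          funext s; cases s <;> simp
        rw [hv, qa_zero, qn_zero, Matrix.mulVec_zero, dotProduct_zero]
        have := mul_pos hlam (dot_self_pos hu)
        linarith
      · have hq := hall v hv
        unfold qf at hq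
        rw [qn_smul_mat] at hq
        have hsq : 0 ≤ (lam • u + ρ • (L *ᵥ v)) ⬝ᵥ (lam • u + ρ • (L *ᵥ v)) :=
          dot_self_nonneg' _
        have hexp : (lam • u + ρ • (L *ᵥ v)) ⬝ᵥ (lam • u + ρ • (L *ᵥ v))
            = lam ^ 2 * (u ⬝ᵥ u) + 2 * lam * ρ * (u ⬝ᵥ (L *ᵥ v)) + ρ ^ 2 * qn L v := by
          simp only [add_dotProduct, dotProduct_add, smul_dotProduct, dotProduct_smul,
            smul_eq_mul]
          rw [dotProduct_comm (L *ᵥ v) u]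
          show _ = _ + _ + ρ ^ 2 * ((L *ᵥ v) ⬝ᵥ (L *ᵥ v))
          ring
        rw [hexp] at hsq
        nlinarith [hq, hsq, hlam, mul_pos hlam hlam]
  · rintro ⟨lam, hPD⟩ ζ hspec
    set e : Fin a → ℝ := fun i => if i = (⟨0, ha⟩ : Fin a) then 1 else 0 with hedef
    have he : e ≠ 0 := by
      intro h0
      have := congrFun h0 ⟨0, ha⟩
      simp [hedef] at this
    have hw0 : Sum.elim e (0 : Fin p → ℝ) ≠ 0 := by
      intro h0
      apply he
      funext i
      exact congrFun h0 (Sum.inl i)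
    have hbl := posdef_apply hPD hw0
    rw [block_value, qa_zero, qn_zero, Matrix.mulVec_zero, dotProduct_zero] at hbl
    have hlam : 0 < lam := by
      have hee : 0 < e ⬝ᵥ e := dot_self_pos he
      nlinarith [hbl, hee]
    refine posDef_iff_dotProduct_mulVec.mpr ⟨?_, ?_⟩
    · show _ᴴ = _
      rw [real_conjTranspose]
      simp only [Matrix.transpose_add, Matrix.transpose_mul, Matrix.transpose_transpose,
        hA0.eq, Matrix.mul_assoc]
      abel
    · intro x hx
      have hstar : star x = x := by funext i; simp
      rw [hstar, lmi_value]
      set u : Fin a → ℝ := ρ⁻¹ • (ζ *ᵥ (R *ᵥ x)) with hudef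
      have hwne : Sum.elim u x ≠ 0 := by
        intro h0; apply hx; funext j; exact congrFun h0 (Sum.inr j)
      have hbl2 := posdef_apply hPD hwne
      rw [block_value] at hbl2
      have hρu : ρ • u = ζ *ᵥ (R *ᵥ x) := by rw [hudef, smul_inv_smul₀ hρ.ne']
      have hcross : (L *ᵥ x) ⬝ᵥ (ζ *ᵥ (R *ᵥ x)) = ρ * (u ⬝ᵥ (L *ᵥ x)) := by
        rw [← hρu, dotProduct_smul, smul_eq_mul, dotProduct_comm]
      have hbound : u ⬝ᵥ u ≤ qn R x := by
        have h1 := euclNorm_mulVec_le_specNorm ζ hspec (R *ᵥ x)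
        have h3 := mul_self_le_mul_self (euclNorm_nonneg _) h1
        have hd1 : (ζ *ᵥ (R *ᵥ x)) ⬝ᵥ (ζ *ᵥ (R *ᵥ x)) ≤ ρ ^ 2 * ((R *ᵥ x) ⬝ᵥ (R *ᵥ x)) := by
          rw [← euclNorm_sq_dot, ← euclNorm_sq_dot]
          nlinarith [h3]
        have huu : u ⬝ᵥ u = ρ⁻¹ ^ 2 * ((ζ *ᵥ (R *ᵥ x)) ⬝ᵥ (ζ *ᵥ (R *ᵥ x))) := by
          rw [hudef, smul_dotProduct, dotProduct_smul]
          simp only [smul_eq_mul]; ring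
        rw [huu]
        have hrfl : qn R x = (R *ᵥ x) ⬝ᵥ (R *ᵥ x) := rfl
        rw [hrfl]
        calc ρ⁻¹ ^ 2 * ((ζ *ᵥ (R *ᵥ x)) ⬝ᵥ (ζ *ᵥ (R *ᵥ x)))
            ≤ ρ⁻¹ ^ 2 * (ρ ^ 2 * ((R *ᵥ x) ⬝ᵥ (R *ᵥ x))) :=
              mul_le_mul_of_nonneg_left hd1 (by positivity)
          _ = (R *ᵥ x) ⬝ᵥ (R *ᵥ x) := by
              field_simp
      rw [hcross]
      have hfin : lam * (u ⬝ᵥ u) ≤ lam * qn R x := mul_le_mul_of_nonneg_left hbound hlam.le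
      have hqa_rfl : qa A0 x = x ⬝ᵥ (A0 *ᵥ x) := rfl
      linarith [hbl2, hfin]
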